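/- Fix $\delta > 0$ and $\delta' > \delta + k/n$, and assume the weighted smoothness tail bounds $\big(\sum_{\alpha > r_j}\lambda_j(\alpha)\big)^{1/2} \le C\, r_j^{-k/n}\, \gamma_j^k\, \|f\|_{H^k(\Omega^m)}$ with weights $\gamma_j \le c\, j^{-(1+\delta')/k}$. Choose ranks $r_j = \lceil \gamma_j^n j^{(1+\delta)n/k} \varepsilon^{-n/k}\rceil$. Then the total Tucker truncation error satisfies $\big(\sum_{j=1}^m \sum_{\alpha_j > r_j}\lambda_j(\alpha_j)\big)^{1/2} \lesssim \varepsilon$ uniformly in $m$, and the core tensor cost $C_m := \prod_{j=1}^m r_j$ satisfies $\log C_m \lesssim \varepsilon^{-n/k}$ uniformly as $m \to \infty$. -/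

import Mathlib

set_option maxHeartbeats 1000000


/-!
STATEMENT 12: weighted Tucker decomposition.  Under the weighted tail
bounds `(∑_{α>r_j} λ_j(α))^{1/2} ≤ C₀ r_j^{-k/n} γ_j^k F` (with
`F = ‖f‖_{H^k(Ω^m)}`), weights `γ_j ≤ c_γ j^{-(1+δ')/k}`, `δ' > δ + k/n`,
and ranks `r_j = ⌈γ_j^n j^{(1+δ)n/k} ε^{-n/k}⌉`, the total Tucker
truncation error satisfies `(∑_{j=1}^m ∑_{α_j>r_j} λ_j(α_j))^{1/2} ≲ ε F`
uniformly in `m`, while the core tensor cost `C_m = ∏_{j=1}^m r_j`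
satisfies `log C_m ≲ ε^{-n/k}` uniformly in `m`.
(Sequences are indexed from `j = 1`.)
-/

noncomputable section

/-- the Tucker rank `r_j = ⌈γ_j^n j^{(1+δ)n/k} ε^{-n/k}⌉`. -/
def tuckerRank (γ : ℕ → ℝ) (n k : ℕ) (δ ε : ℝ) (j : ℕ) : ℕ :=
  ⌈γ j ^ n * (j : ℝ) ^ ((1 + δ) * n / k) * ε ^ (-(n : ℝ) / k)⌉₊

theorem stmt12 (n k : ℕ) (hn : 1 ≤ n) (hk : 1 ≤ k)
    (δ δ' cγ C₀ F : ℝ) (hδ : 0 < δ) (hδ' : δ + (k : ℝ) / n < δ')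
    (hcγ : 0 < cγ) (hC₀ : 0 < C₀) (hF : 0 ≤ F)
    (γ : ℕ → ℝ) (hγpos : ∀ j, 0 < γ j)
    -- algebraically decaying weights
    (hγ : ∀ j : ℕ, 1 ≤ j → γ j ≤ cγ * (j : ℝ) ^ (-(1 + δ') / k)) :
    ∃ C : ℝ, 0 < C ∧
      ∀ m : ℕ, 1 ≤ m →
      ∀ lam : ℕ → ℕ → ℝ, (∀ j α, 0 ≤ lam j α) →
      (∀ j, Summable (lam j)) →
      -- weighted singular-value tail bounds of the matricizations
      (∀ j : ℕ, 1 ≤ j → j ≤ m → ∀ r : ℕ, 1 ≤ r →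
        Real.sqrt (∑' α : ℕ, lam j (r + α)) ≤
          C₀ * (r : ℝ) ^ (-(k : ℝ) / n) * γ j ^ k * F) →
      ∀ ε : ℝ, 0 < ε → ε ≤ 1 →
        Real.sqrt (∑ j ∈ Finset.Icc 1 m,
            ∑' α : ℕ, lam j (tuckerRank γ n k δ ε j + α)) ≤ C * ε * F ∧
        Real.log (∏ j ∈ Finset.Icc 1 m, (tuckerRank γ n k δ ε j : ℝ)) ≤
          C * ε ^ (-(n : ℝ) / k) := by
  have hn0 : (0:ℝ) < n := by exact_mod_cast hn
  have hk0 : (0:ℝ) < k := by exact_mod_cast hk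
  have hnne : (n:ℝ) ≠ 0 := hn0.ne'
  have hkne : (k:ℝ) ≠ 0 := hk0.ne'
  set θ : ℝ := (δ' - δ) * n / k with hθdef
  have hθ : 1 < θ := by
    rw [hθdef, lt_div_iff₀ hk0, one_mul]
    have h1 : (k:ℝ) / n < δ' - δ := by linarith
    calc (k:ℝ) = (k:ℝ)/n * n := by field_simp
    _ < (δ' - δ) * n := by
        exact mul_lt_mul_of_pos_right h1 hn0
  have hsum2 : Summable (fun j : ℕ => (j:ℝ) ^ (-2 : ℝ)) :=
    Real.summable_nat_rpow.mpr (by norm_num)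
  have hsumθ : Summable (fun j : ℕ => (j:ℝ) ^ (-θ)) :=
    Real.summable_nat_rpow.mpr (by linarith)
  set T2 : ℝ := ∑' j : ℕ, (j:ℝ) ^ (-2 : ℝ) with hT2def
  set T : ℝ := ∑' j : ℕ, (j:ℝ) ^ (-θ) with hTdef
  have hT2 : 0 ≤ T2 := tsum_nonneg fun j => Real.rpow_nonneg (Nat.cast_nonneg j) _
  have hT : 0 ≤ T := tsum_nonneg fun j => Real.rpow_nonneg (Nat.cast_nonneg j) _
  refine ⟨max (C₀ * Real.sqrt T2) (cγ ^ n * T) + 1, ?_, ?_⟩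
  · have h1 : 0 ≤ C₀ * Real.sqrt T2 := by positivity
    have := le_max_left (C₀ * Real.sqrt T2) (cγ ^ n * T)
    linarith
  intro m hm lam hlam hsumlam htail ε hε hε1
  set C : ℝ := max (C₀ * Real.sqrt T2) (cγ ^ n * T) + 1 with hCdef
  have hC1 : C₀ * Real.sqrt T2 ≤ C := by
    have h := le_max_left (C₀ * Real.sqrt T2) (cγ ^ n * T)
    rw [hCdef]; linarith
  have hC2 : cγ ^ n * T ≤ C := by
    have h := le_max_right (C₀ * Real.sqrt T2) (cγ ^ n * T)
    rw [hCdef]; linarith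
  -- positivity of x_j and r_j
  have hxpos : ∀ j : ℕ, 1 ≤ j →
      0 < γ j ^ n * (j:ℝ) ^ ((1 + δ) * n / k) * ε ^ (-(n:ℝ)/k) := by
    intro j hj
    have hj0 : (0:ℝ) < j := by exact_mod_cast hj
    have := hγpos j
    positivity
  have hr1 : ∀ j : ℕ, 1 ≤ j → 1 ≤ tuckerRank γ n k δ ε j := by
    intro j hj
    exact Nat.one_le_ceil_iff.mpr (hxpos j hj)
  constructor
  · -- error bound
    have key : ∀ j ∈ Finset.Icc 1 m,
        (∑' α : ℕ, lam j (tuckerRank γ n k δ ε j + α)) ≤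
          (C₀ * ε * F) ^ 2 * (j:ℝ) ^ (-2 : ℝ) := by
      intro j hj
      rw [Finset.mem_Icc] at hj
      obtain ⟨hj1, hj2⟩ := hj
      have hj0 : (0:ℝ) < j := by exact_mod_cast hj1
      have hj1' : (1:ℝ) ≤ j := by exact_mod_cast hj1
      have h1 := htail j hj1 hj2 (tuckerRank γ n k δ ε j) (hr1 j hj1)
      set x : ℝ := γ j ^ n * (j:ℝ) ^ ((1 + δ) * n / k) * ε ^ (-(n:ℝ)/k) with hxdef
      have hx : 0 < x := hxpos j hj1
      have hrx : x ≤ (tuckerRank γ n k δ ε j : ℝ) := Nat.le_ceil _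
      have h2 : ((tuckerRank γ n k δ ε j : ℝ)) ^ (-(k:ℝ)/n) ≤ x ^ (-(k:ℝ)/n) := by
        refine Real.rpow_le_rpow_of_nonpos hx hrx ?_
        exact div_nonpos_of_nonpos_of_nonneg (by simp) hn0.le
      have hxe : x ^ (-(k:ℝ)/n) = (γ j ^ k)⁻¹ * (j:ℝ) ^ (-(1 + δ)) * ε := by
        have hγn0 : (0:ℝ) ≤ γ j ^ n := pow_nonneg (hγpos j).le n
        rw [hxdef,
          Real.mul_rpow (mul_nonneg hγn0 (Real.rpow_nonneg hj0.le _))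
            (Real.rpow_nonneg hε.le _),
          Real.mul_rpow hγn0 (Real.rpow_nonneg hj0.le _),
          ← Real.rpow_natCast (γ j) n, ← Real.rpow_mul (hγpos j).le,
          ← Real.rpow_mul hj0.le, ← Real.rpow_mul hε.le]
        have e1 : (n:ℝ) * (-(k:ℝ)/n) = -(k:ℝ) := by field_simp
        have e2 : ((1 + δ) * n / k) * (-(k:ℝ)/n) = -(1 + δ) := by
          field_simp
        have e3 : (-(n:ℝ)/k) * (-(k:ℝ)/n) = 1 := by
          rw [div_mul_div_comm]; rw [neg_mul_neg]
          rw [div_eq_one_iff_eq (by positivity)]; ring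
        rw [e1, e2, e3, Real.rpow_one, Real.rpow_neg (hγpos j).le,
          Real.rpow_natCast]
      have h3 : Real.sqrt (∑' α : ℕ, lam j (tuckerRank γ n k δ ε j + α)) ≤
          C₀ * ε * F * (j:ℝ) ^ (-(1 + δ)) := by
        refine h1.trans ?_
        have h4 : C₀ * ((tuckerRank γ n k δ ε j : ℝ)) ^ (-(k:ℝ)/n) * γ j ^ k * F ≤
            C₀ * (x ^ (-(k:ℝ)/n)) * γ j ^ k * F := by
          have hγk : (0:ℝ) ≤ γ j ^ k := pow_nonneg (hγpos j).le k
          have := mul_le_mul_of_nonneg_left h2 hC₀.le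
          exact mul_le_mul_of_nonneg_right (mul_le_mul_of_nonneg_right this hγk) hF
        refine h4.trans_eq ?_
        rw [hxe]
        have hγkne : γ j ^ k ≠ 0 := (pow_pos (hγpos j) k).ne'
        field_simp
      have htnn : 0 ≤ ∑' α : ℕ, lam j (tuckerRank γ n k δ ε j + α) :=
        tsum_nonneg fun α => hlam j _
      have h5 : (∑' α : ℕ, lam j (tuckerRank γ n k δ ε j + α)) ≤
          (C₀ * ε * F * (j:ℝ) ^ (-(1 + δ))) ^ 2 := by
        have h := pow_le_pow_left₀ (Real.sqrt_nonneg _) h3 2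
        rwa [Real.sq_sqrt htnn] at h
      refine h5.trans ?_
      have h6 : ((j:ℝ) ^ (-(1 + δ))) ^ 2 = (j:ℝ) ^ ((-(1 + δ)) * 2) := by
        rw [← Real.rpow_natCast ((j:ℝ) ^ (-(1 + δ))) 2, ← Real.rpow_mul hj0.le]
        norm_num
      have h7 : (j:ℝ) ^ ((-(1 + δ)) * 2) ≤ (j:ℝ) ^ (-2 : ℝ) :=
        Real.rpow_le_rpow_of_exponent_le hj1' (by nlinarith)
      calc (C₀ * ε * F * (j:ℝ) ^ (-(1 + δ))) ^ 2
          = (C₀ * ε * F) ^ 2 * ((j:ℝ) ^ (-(1 + δ))) ^ 2 := by ring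
        _ ≤ (C₀ * ε * F) ^ 2 * (j:ℝ) ^ (-2 : ℝ) := by
            rw [h6]; exact mul_le_mul_of_nonneg_left h7 (by positivity)
    have hsum : (∑ j ∈ Finset.Icc 1 m, ∑' α : ℕ, lam j (tuckerRank γ n k δ ε j + α)) ≤
        (C₀ * ε * F) ^ 2 * T2 := by
      calc (∑ j ∈ Finset.Icc 1 m, ∑' α : ℕ, lam j (tuckerRank γ n k δ ε j + α))
          ≤ ∑ j ∈ Finset.Icc 1 m, (C₀ * ε * F) ^ 2 * (j:ℝ) ^ (-2 : ℝ) :=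
            Finset.sum_le_sum key
        _ = (C₀ * ε * F) ^ 2 * ∑ j ∈ Finset.Icc 1 m, (j:ℝ) ^ (-2 : ℝ) := by
            rw [Finset.mul_sum]
        _ ≤ (C₀ * ε * F) ^ 2 * T2 := by
            refine mul_le_mul_of_nonneg_left ?_ (by positivity)
            exact Summable.sum_le_tsum _ (fun j _ => Real.rpow_nonneg (Nat.cast_nonneg j) _) hsum2
    calc Real.sqrt (∑ j ∈ Finset.Icc 1 m, ∑' α : ℕ, lam j (tuckerRank γ n k δ ε j + α))
        ≤ Real.sqrt ((C₀ * ε * F) ^ 2 * T2) := Real.sqrt_le_sqrt hsum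
      _ = (C₀ * ε * F) * Real.sqrt T2 := by
          rw [Real.sqrt_mul (sq_nonneg _), Real.sqrt_sq (by positivity)]
      _ = (C₀ * Real.sqrt T2) * (ε * F) := by ring
      _ ≤ C * (ε * F) := mul_le_mul_of_nonneg_right hC1 (by positivity)
      _ = C * ε * F := by ring
  · -- cost bound
    have hne : ∀ j ∈ Finset.Icc 1 m, ((tuckerRank γ n k δ ε j : ℝ)) ≠ 0 := by
      intro j hj
      rw [Finset.mem_Icc] at hj
      have := hr1 j hj.1
      positivity
    rw [Real.log_prod hne]
    have key : ∀ j ∈ Finset.Icc 1 m,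
        Real.log ((tuckerRank γ n k δ ε j : ℝ)) ≤
          cγ ^ n * (j:ℝ) ^ (-θ) * ε ^ (-(n:ℝ)/k) := by
      intro j hj
      rw [Finset.mem_Icc] at hj
      obtain ⟨hj1, _⟩ := hj
      have hj0 : (0:ℝ) < j := by exact_mod_cast hj1
      set x : ℝ := γ j ^ n * (j:ℝ) ^ ((1 + δ) * n / k) * ε ^ (-(n:ℝ)/k) with hxdef
      have hx : 0 < x := hxpos j hj1
      have hlog : Real.log ((tuckerRank γ n k δ ε j : ℝ)) ≤ x := by
        have hle : ((tuckerRank γ n k δ ε j : ℝ)) ≤ x + 1 :=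
          (Nat.ceil_lt_add_one hx.le).le
        have hpos : (0:ℝ) < (tuckerRank γ n k δ ε j : ℝ) := by
          have := hr1 j hj1; positivity
        calc Real.log ((tuckerRank γ n k δ ε j : ℝ)) ≤ Real.log (x + 1) :=
              Real.log_le_log hpos hle
          _ ≤ x + 1 - 1 := Real.log_le_sub_one_of_pos (by linarith)
          _ = x := by ring
      refine hlog.trans ?_
      -- x ≤ cγ^n * j^(-θ) * ε^(-n/k)
      have hγn : γ j ^ n ≤ cγ ^ n * (j:ℝ) ^ ((-(1 + δ') / k) * n) := by
        have h1 : γ j ^ n ≤ (cγ * (j:ℝ) ^ (-(1 + δ') / k)) ^ n :=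
          pow_le_pow_left₀ (hγpos j).le (hγ j hj1) n
        refine h1.trans_eq ?_
        rw [mul_pow, ← Real.rpow_natCast ((j:ℝ) ^ (-(1 + δ') / k)) n,
          ← Real.rpow_mul hj0.le]
      have hcomb : (j:ℝ) ^ ((-(1 + δ') / k) * n) * (j:ℝ) ^ ((1 + δ) * n / k) =
          (j:ℝ) ^ (-θ) := by
        rw [← Real.rpow_add hj0]
        congr 1
        rw [hθdef]
        field_simp
        ring
      calc x = (γ j ^ n * (j:ℝ) ^ ((1 + δ) * n / k)) * ε ^ (-(n:ℝ)/k) := by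
            rw [hxdef]
        _ ≤ (cγ ^ n * (j:ℝ) ^ ((-(1 + δ') / k) * n) * (j:ℝ) ^ ((1 + δ) * n / k)) *
              ε ^ (-(n:ℝ)/k) := by
            refine mul_le_mul_of_nonneg_right ?_ (by positivity)
            exact mul_le_mul_of_nonneg_right hγn (by positivity)
        _ = cγ ^ n * (j:ℝ) ^ (-θ) * ε ^ (-(n:ℝ)/k) := by
            rw [← hcomb]; ring
    calc (∑ j ∈ Finset.Icc 1 m, Real.log ((tuckerRank γ n k δ ε j : ℝ)))
        ≤ ∑ j ∈ Finset.Icc 1 m, cγ ^ n * (j:ℝ) ^ (-θ) * ε ^ (-(n:ℝ)/k) :=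
          Finset.sum_le_sum key
      _ = (cγ ^ n * ε ^ (-(n:ℝ)/k)) * ∑ j ∈ Finset.Icc 1 m, (j:ℝ) ^ (-θ) := by
          rw [Finset.mul_sum]; exact Finset.sum_congr rfl fun j _ => by ring
      _ ≤ (cγ ^ n * ε ^ (-(n:ℝ)/k)) * T := by
          refine mul_le_mul_of_nonneg_left ?_ (by positivity)
          exact Summable.sum_le_tsum _ (fun j _ => Real.rpow_nonneg (Nat.cast_nonneg j) _) hsumθ
      _ = (cγ ^ n * T) * ε ^ (-(n:ℝ)/k) := by ring
      _ ≤ C * ε ^ (-(n:ℝ)/k) := mul_le_mul_of_nonneg_right hC2 (by positivity)
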